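/- Assume a d×d matrix-valued function Φ(x) and projection Q satisfy the bounded dichotomy estimates ‖Φ(x)QΦ(x')⁻¹‖ ≤ M for x ≥ x' and ‖Φ(x)(I−Q)Φ(x')⁻¹‖ ≤ M for x ≤ x'. If ‖R(·)‖ ∈ L¹(ℝ) and R_ℓ, R_r are the factors of the polar decomposition factorization R = R_ℓ R_r with ‖R_r(x)‖, ‖R_ℓ(x)‖ ≤ ‖R(x)‖^{1/2}, then the integral kernel K(x,x') defined by K(x,x') = −R_r(x)Φ(x)QΦ(x')⁻¹R_ℓ(x') for x ≥ x' and K(x,x') = R_r(x)Φ(x)(I−Q)Φ(x')⁻¹R_ℓ(x') for x < x' satisfies ∬ ‖K(x,x')‖² dx dx' ≤ M² (∫ ‖R(x)‖ dx)², and hence defines a Hilbert–Schmidt operator on L²(ℝ)^d. -/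

import Mathlib

open MeasureTheory
open scoped Matrix.Norms.L2Operator NNReal ENNReal

/-- Under a bounded dichotomy `Q` for `Φ` with constant `M`, and a factorization
`R = R_ℓ R_r` with `‖R_r(x)‖, ‖R_ℓ(x)‖ ≤ ‖R(x)‖^{1/2}` and `‖R(·)‖ ∈ L¹(ℝ)`, the
Birman–Schwinger kernel `K` satisfies `∬ ‖K(x,x')‖² dx dx' ≤ M² (∫ ‖R(x)‖ dx)²`,
and hence defines a Hilbert–Schmidt operator on `L²(ℝ)^d`. -/
theorem stmt_3 (d : ℕ) (Φ : ℝ → Matrix (Fin d) (Fin d) ℂ)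
    (Q : Matrix (Fin d) (Fin d) ℂ) (M : ℝ) (hM : 1 ≤ M)
    (hΦ : ∀ x, IsUnit (Φ x))
    (hdich1 : ∀ x x' : ℝ, x' ≤ x → ‖Φ x * Q * (Φ x')⁻¹‖ ≤ M)
    (hdich2 : ∀ x x' : ℝ, x ≤ x' → ‖Φ x * (1 - Q) * (Φ x')⁻¹‖ ≤ M)
    (R Rl Rr : ℝ → Matrix (Fin d) (Fin d) ℂ)
    (hfact : ∀ x, R x = Rl x * Rr x)
    (hRl : ∀ x, ‖Rl x‖ ≤ Real.sqrt ‖R x‖)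
    (hRr : ∀ x, ‖Rr x‖ ≤ Real.sqrt ‖R x‖)
    (hRint : Integrable (fun x => ‖R x‖))
    (K : ℝ → ℝ → Matrix (Fin d) (Fin d) ℂ)
    (hK : ∀ x x' : ℝ, K x x' =
      if x' ≤ x then -(Rr x * (Φ x * Q * (Φ x')⁻¹) * Rl x')
      else Rr x * (Φ x * (1 - Q) * (Φ x')⁻¹) * Rl x') :
    ∫⁻ p : ℝ × ℝ, (‖K p.1 p.2‖₊ : ℝ≥0∞) ^ 2
      ≤ ENNReal.ofReal (M ^ 2 * (∫ x : ℝ, ‖R x‖) ^ 2) := by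
  have hM0 : (0:ℝ) ≤ M := le_trans zero_le_one hM
  have hR0 : ∀ x, (0:ℝ) ≤ ‖R x‖ := fun x => norm_nonneg _
  -- pointwise bound
  have hpt : ∀ x x' : ℝ, ‖K x x'‖ ≤ Real.sqrt ‖R x‖ * M * Real.sqrt ‖R x'‖ := by
    intro x x'
    rw [hK x x']
    split_ifs with h
    · rw [norm_neg]
      calc ‖Rr x * (Φ x * Q * (Φ x')⁻¹) * Rl x'‖
          ≤ ‖Rr x * (Φ x * Q * (Φ x')⁻¹)‖ * ‖Rl x'‖ := norm_mul_le _ _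
        _ ≤ ‖Rr x‖ * ‖Φ x * Q * (Φ x')⁻¹‖ * ‖Rl x'‖ := by
            gcongr; exact norm_mul_le _ _
        _ ≤ Real.sqrt ‖R x‖ * M * Real.sqrt ‖R x'‖ :=
            mul_le_mul (mul_le_mul (hRr x) (hdich1 x x' h) (norm_nonneg _)
              (Real.sqrt_nonneg _)) (hRl x') (norm_nonneg _)
              (mul_nonneg (Real.sqrt_nonneg _) hM0)
    · calc ‖Rr x * (Φ x * (1 - Q) * (Φ x')⁻¹) * Rl x'‖
          ≤ ‖Rr x * (Φ x * (1 - Q) * (Φ x')⁻¹)‖ * ‖Rl x'‖ := norm_mul_le _ _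
        _ ≤ ‖Rr x‖ * ‖Φ x * (1 - Q) * (Φ x')⁻¹‖ * ‖Rl x'‖ := by
            gcongr; exact norm_mul_le _ _
        _ ≤ Real.sqrt ‖R x‖ * M * Real.sqrt ‖R x'‖ :=
            mul_le_mul (mul_le_mul (hRr x) (hdich2 x x' (le_of_not_ge h)) (norm_nonneg _)
              (Real.sqrt_nonneg _)) (hRl x') (norm_nonneg _)
              (mul_nonneg (Real.sqrt_nonneg _) hM0)
  have hsq : ∀ x x' : ℝ, ‖K x x'‖ ^ 2 ≤ M ^ 2 * (‖R x‖ * ‖R x'‖) := by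
    intro x x'
    have h1 := hpt x x'
    have h2 : (Real.sqrt ‖R x‖ * M * Real.sqrt ‖R x'‖) ^ 2
        = M ^ 2 * (‖R x‖ * ‖R x'‖) := by
      rw [mul_pow, mul_pow, Real.sq_sqrt (hR0 x), Real.sq_sqrt (hR0 x')]
      ring
    calc ‖K x x'‖ ^ 2 ≤ (Real.sqrt ‖R x‖ * M * Real.sqrt ‖R x'‖) ^ 2 := by
          apply pow_le_pow_left₀ (norm_nonneg _) h1
      _ = M ^ 2 * (‖R x‖ * ‖R x'‖) := h2
  have hmeas : AEMeasurable (fun x => ENNReal.ofReal ‖R x‖) (volume : Measure ℝ) :=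
    ENNReal.measurable_ofReal.comp_aemeasurable hRint.aestronglyMeasurable.aemeasurable
  have hIR : (0:ℝ) ≤ ∫ x, ‖R x‖ := integral_nonneg fun x => hR0 x
  have hlR : ∫⁻ x, ENNReal.ofReal ‖R x‖ = ENNReal.ofReal (∫ x, ‖R x‖) :=
    (ofReal_integral_eq_lintegral_ofReal hRint (Filter.Eventually.of_forall hR0)).symm
  calc ∫⁻ p : ℝ × ℝ, (‖K p.1 p.2‖₊ : ℝ≥0∞) ^ 2
      ≤ ∫⁻ p : ℝ × ℝ, ENNReal.ofReal (M ^ 2) *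
          (ENNReal.ofReal ‖R p.1‖ * ENNReal.ofReal ‖R p.2‖) := by
        apply lintegral_mono
        intro p
        dsimp only
        have h : (‖K p.1 p.2‖₊ : ℝ≥0∞) ^ 2 = ENNReal.ofReal (‖K p.1 p.2‖ ^ 2) := by
          rw [ENNReal.ofReal_pow (norm_nonneg _), ← coe_nnnorm, ENNReal.ofReal_coe_nnreal]
        rw [h, ← ENNReal.ofReal_mul (hR0 p.1), ← ENNReal.ofReal_mul (sq_nonneg M)]
        exact ENNReal.ofReal_le_ofReal (hsq p.1 p.2)
    _ = ENNReal.ofReal (M ^ 2) *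
          ∫⁻ p : ℝ × ℝ, ENNReal.ofReal ‖R p.1‖ * ENNReal.ofReal ‖R p.2‖ := by
        rw [lintegral_const_mul' _ _ ENNReal.ofReal_ne_top]
    _ = ENNReal.ofReal (M ^ 2) *
          ((∫⁻ x, ENNReal.ofReal ‖R x‖) * ∫⁻ x, ENNReal.ofReal ‖R x‖) := by
        rw [MeasureTheory.Measure.volume_eq_prod, lintegral_prod_mul hmeas hmeas]
    _ = ENNReal.ofReal (M ^ 2 * (∫ x, ‖R x‖) ^ 2) := by
        rw [hlR, ← ENNReal.ofReal_mul hIR, ← sq,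
          ← ENNReal.ofReal_mul (sq_nonneg M)]
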